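/- Let C be a monoidal groupoid with chosen right duals, and let d : cKer d₀(C) → C₀ be given by d(x, y, f) := y. Then: (1) d is a c-group morphism; (2) d(r·(x, y, f)) = r ⊗ (d(x, y, f) ⊗ rᘁ), i.e. the equality ∂(b·a) = b + (∂(a) + (−b)) holds; (3) d(x, y, f)·(x', y', f') ∼ (x, y, f) + ((x', y', f') + (−(x, y, f))) for all elements of cKer d₀(C); and (4) cKer d₀(C) is connected: any two of its elements are congruent. Hence (cKer d₀(C), C₀, d) is a connected c-crossed module. (Paper's Proposition: (cKer d₀, C₀, d) with d = d₁ restricted to cKer d₀ is a connected c-crossed module.) -/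

import Mathlib

open CategoryTheory MonoidalCategory

/-- The data of a c-group: a relation, an addition, a zero and a negation. -/
structure CGroupData (G : Type*) where
  rel : G → G → Prop
  add : G → G → G
  zero : G
  neg : G → G

variable (C : Type*) [Groupoid C] [MonoidalCategory C] [RightRigidCategory C]

/-- The c-group `C₀` of objects: relation `x ∼ y` iff `x ≅ y`, addition `⊗`,
zero `𝟙_C`, negation `x ↦ xᘁ`. -/
def objectsCGroupData : CGroupData C where
  rel x y := Nonempty (x ≅ y)
  add x y := x ⊗ y
  zero := 𝟙_ C
  neg x := xᘁ

/-- `cKer d₀(C)`: triples `(x, y, f)` with `f : x ⟶ y` and `x` isomorphic to `𝟙_C`. -/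
structure CKerD0 where
  dom : C
  cod : C
  hom : dom ⟶ cod
  domIso : Nonempty (dom ≅ 𝟙_ C)

variable {C}

/-- The c-group structure on `cKer d₀(C)`. -/
def cKerCGroupData : CGroupData (CKerD0 C) where
  rel p q := ∃ (θ₀ : p.dom ≅ q.dom) (θ₁ : p.cod ≅ q.cod),
    p.hom ≫ θ₁.hom = θ₀.hom ≫ q.hom
  add p q := ⟨p.dom ⊗ q.dom, p.cod ⊗ q.cod, p.hom ⊗ₘ q.hom,
    p.domIso.elim fun i => q.domIso.elim fun j => ⟨(i ⊗ᵢ j) ≪≫ λ_ (𝟙_ C)⟩⟩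
  zero := ⟨𝟙_ C, 𝟙_ C, 𝟙 (𝟙_ C), ⟨Iso.refl _⟩⟩
  neg p := ⟨p.domᘁ, p.codᘁ, (Groupoid.inv p.hom)ᘁ,
    p.domIso.elim fun i =>
      ⟨(ρ_ (p.domᘁ)).symm ≪≫ whiskerLeftIso (p.domᘁ) i.symm ≪≫
        asIso (ε_ p.dom (p.domᘁ))⟩⟩

/-- The conjugation action of the objects on `cKer d₀(C)`. -/
def actCKer (r : C) (p : CKerD0 C) : CKerD0 C :=
  ⟨r ⊗ (p.dom ⊗ rᘁ), r ⊗ (p.cod ⊗ rᘁ), 𝟙 r ⊗ₘ (p.hom ⊗ₘ 𝟙 (rᘁ)),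
    p.domIso.elim fun i =>
      ⟨whiskerLeftIso r ((i ⊗ᵢ Iso.refl (rᘁ)) ≪≫ λ_ (rᘁ)) ≪≫
        (asIso (η_ r (rᘁ))).symm⟩⟩

/-- The boundary map `d : cKer d₀(C) → C₀`, `d(x, y, f) := y`. -/
def dCKer (p : CKerD0 C) : C := p.cod

/-- `(cKer d₀(C), C₀, d)` is a connected c-crossed module: `d` is a c-group morphism,
`d(r·(x,y,f)) = r ⊗ (d(x,y,f) ⊗ rᘁ)`, `d(x,y,f)·(x',y',f') ∼ (x,y,f) + ((x',y',f') +
(−(x,y,f)))`, and `cKer d₀(C)` is connected. -/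
theorem cKer_cCrossedModule :
    -- (1) `d` is a c-group morphism
    (∀ p q : CKerD0 C, dCKer ((cKerCGroupData (C := C)).add p q) =
      (objectsCGroupData C).add (dCKer p) (dCKer q)) ∧
    (∀ p q : CKerD0 C, (cKerCGroupData (C := C)).rel p q →
      (objectsCGroupData C).rel (dCKer p) (dCKer q)) ∧
    -- (2) `∂(b·a) = b + (∂(a) + (−b))` holds as an equality
    (∀ (r : C) (p : CKerD0 C), dCKer (actCKer r p) =
      (objectsCGroupData C).add r
        ((objectsCGroupData C).add (dCKer p) ((objectsCGroupData C).neg r))) ∧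
    -- (3) `∂(a)·a₁ ∼ a + (a₁ + (−a))`
    (∀ p q : CKerD0 C, (cKerCGroupData (C := C)).rel (actCKer (dCKer p) q)
      ((cKerCGroupData (C := C)).add p
        ((cKerCGroupData (C := C)).add q ((cKerCGroupData (C := C)).neg p)))) ∧
    -- (4) `cKer d₀(C)` is connected
    (∀ p q : CKerD0 C, (cKerCGroupData (C := C)).rel p q) := by
  have conn : ∀ p q : CKerD0 C, (cKerCGroupData (C := C)).rel p q := by
    intro p q
    obtain ⟨i⟩ := p.domIso
    obtain ⟨j⟩ := q.domIso
    exact ⟨i ≪≫ j.symm,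
      (asIso p.hom).symm ≪≫ (i ≪≫ j.symm) ≪≫ asIso q.hom, by simp⟩
  exact ⟨fun p q => rfl,
    fun p q h => h.elim fun θ₀ h => h.elim fun θ₁ _ => ⟨θ₁⟩,
    fun r p => rfl,
    fun p q => conn _ _,
    conn⟩
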